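/- arXiv:1406.3320 — 3 statements merged into one kernel-verified Lean document; each statement's English description precedes it below -/
import Mathlib

section
/- Let n be a positive integer, let u₀ > 0 and let u₁, …, u_n be real numbers, and define h(t) = u₀·sinh(t) + Σ_{j=1}^{n} u_j·t^{j−1} for real t, and set φ(t) = tanh(h(t)). Then the derivative of φ decays double exponentially: there exist constants C > 0, β > 0 and γ > 0 such that |φ'(x)| ≤ C·exp(−β·e^{γ|x|}) for all real x. -/
open Real
set_option maxHeartbeats 1000000

private theorem hasDerivAt_tanh' (y : ℝ) :
    HasDerivAt Real.tanh (1 / Real.cosh y ^ 2) y := by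
  have h := (Real.hasDerivAt_sinh y).div (Real.hasDerivAt_cosh y) (Real.cosh_pos y).ne'
  have heq : (Real.cosh y * Real.cosh y - Real.sinh y * Real.sinh y) / Real.cosh y ^ 2
      = 1 / Real.cosh y ^ 2 := by
    congr 1; nlinarith [Real.cosh_sq_sub_sinh_sq y]
  rw [heq] at h
  have : Real.tanh = fun t => Real.sinh t / Real.cosh t := by
    funext t; exact Real.tanh_eq_sinh_div_cosh t
  rw [this]
  exact h

private theorem poly_growth (n : ℕ) (hn : 0 < n) (x : ℝ) :
    (1 + |x|) ^ n ≤ (2 * n) ^ n * Real.exp (|x| / 2) := by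
  have hn' : (1 : ℝ) ≤ n := by exact_mod_cast hn
  have h0 : |x| / (2 * n) + 1 ≤ Real.exp (|x| / (2 * n)) := Real.add_one_le_exp _
  have h2n : (0 : ℝ) < 2 * n := by positivity
  have h1 : 1 + |x| ≤ 2 * n * Real.exp (|x| / (2 * n)) := by
    have := mul_le_mul_of_nonneg_left h0 h2n.le
    rw [mul_add, mul_div_cancel₀ _ h2n.ne'] at this
    nlinarith [abs_nonneg x]
  calc (1 + |x|) ^ n ≤ (2 * n * Real.exp (|x| / (2 * n))) ^ n := by
        apply pow_le_pow_left₀ (by positivity) h1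
    _ = (2 * n) ^ n * Real.exp (|x| / 2) := by
        rw [mul_pow, ← Real.exp_nat_mul]
        congr 2
        field_simp

/-- For the polynomially adjusted `sinh` map
`h(t) = u₀ sinh t + Σ_{j=1}^{n} u_j t^{j−1}` with `u₀ > 0`, the derivative of
`φ = tanh ∘ h` decays double exponentially on the real line. -/
theorem deriv_tanh_polynomial_sinh_double_exponential_decay
    (n : ℕ) (hn : 0 < n) (u₀ : ℝ) (hu₀ : 0 < u₀) (u : ℕ → ℝ) :
    ∃ C β γ : ℝ, 0 < C ∧ 0 < β ∧ 0 < γ ∧ ∀ x : ℝ,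
      |deriv (fun t : ℝ =>
          Real.tanh (u₀ * Real.sinh t + ∑ j ∈ Finset.Icc 1 n, u j * t ^ (j - 1))) x| ≤
        C * Real.exp (-(β * Real.exp (γ * |x|))) := by
  obtain ⟨U, hUdef⟩ : ∃ U : ℝ, U = ∑ j ∈ Finset.Icc 1 n, |u j| := ⟨_, rfl⟩
  have hU0 : 0 ≤ U := hUdef ▸ Finset.sum_nonneg fun j _ => abs_nonneg _
  obtain ⟨B, hBdef⟩ : ∃ B : ℝ, B = U * (2 * n) ^ n := ⟨_, rfl⟩
  have hB0 : 0 ≤ B := by rw [hBdef]; positivity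
  refine ⟨16 * (u₀ + n * B) / u₀ * Real.exp (u₀ + 4 * B ^ 2 / u₀), u₀ / 2, 1,
    by positivity, by positivity, one_pos, fun x => ?_⟩
  obtain ⟨s, hs⟩ : ∃ s : ℝ, s = Real.exp |x| := ⟨_, rfl⟩
  obtain ⟨r, hr⟩ : ∃ r : ℝ, r = Real.exp (|x| / 2) := ⟨_, rfl⟩
  have hr2 : r ^ 2 = s := by
    rw [hr, hs, ← Real.exp_nat_mul]; congr 1; ring
  have hr1 : (1 : ℝ) ≤ r := hr ▸ Real.one_le_exp (by positivity)
  have hrs : r ≤ s := by rw [hr, hs]; exact Real.exp_le_exp.2 (by nlinarith [abs_nonneg x])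
  have hs1 : (1 : ℝ) ≤ s := le_trans hr1 hrs
  -- polynomial bounds
  have hgrow : (1 + |x|) ^ n ≤ (2 * n) ^ n * r := hr ▸ poly_growth n hn x
  have hPb : |∑ j ∈ Finset.Icc 1 n, u j * x ^ (j - 1)| ≤ B * r := by
    calc |∑ j ∈ Finset.Icc 1 n, u j * x ^ (j - 1)|
        ≤ ∑ j ∈ Finset.Icc 1 n, |u j * x ^ (j - 1)| := Finset.abs_sum_le_sum_abs _ _
      _ ≤ ∑ j ∈ Finset.Icc 1 n, |u j| * ((2 * n) ^ n * r) := by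
          apply Finset.sum_le_sum
          intro j hj
          rw [abs_mul, abs_pow]
          apply mul_le_mul_of_nonneg_left _ (abs_nonneg _)
          have hjn := Finset.mem_Icc.mp hj
          calc |x| ^ (j - 1) ≤ (1 + |x|) ^ (j - 1) := by
                apply pow_le_pow_left₀ (abs_nonneg x); linarith [abs_nonneg x]
            _ ≤ (1 + |x|) ^ n := by
                apply pow_le_pow_right₀ (by linarith [abs_nonneg x]); omega
            _ ≤ (2 * n) ^ n * r := hgrow
      _ = B * r := by rw [← Finset.sum_mul, ← hUdef, hBdef]; ring
  have hQb : |∑ j ∈ Finset.Icc 1 n, u j * ((j - 1 : ℕ) * x ^ (j - 1 - 1))| ≤ n * B * r := by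
    calc |∑ j ∈ Finset.Icc 1 n, u j * ((j - 1 : ℕ) * x ^ (j - 1 - 1))|
        ≤ ∑ j ∈ Finset.Icc 1 n, |u j * ((j - 1 : ℕ) * x ^ (j - 1 - 1))| :=
          Finset.abs_sum_le_sum_abs _ _
      _ ≤ ∑ j ∈ Finset.Icc 1 n, |u j| * ((n : ℝ) * ((2 * n) ^ n * r)) := by
          apply Finset.sum_le_sum
          intro j hj
          rw [abs_mul, abs_mul, abs_pow]
          apply mul_le_mul_of_nonneg_left _ (abs_nonneg _)
          have hjn := Finset.mem_Icc.mp hj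
          have hj1 : |((j - 1 : ℕ) : ℝ)| ≤ (n : ℝ) := by
            rw [Nat.abs_cast]; exact_mod_cast Nat.sub_le_of_le_add (by omega)
          have hxp : |x| ^ (j - 1 - 1) ≤ (2 * n) ^ n * r := by
            calc |x| ^ (j - 1 - 1) ≤ (1 + |x|) ^ (j - 1 - 1) := by
                  apply pow_le_pow_left₀ (abs_nonneg x); linarith [abs_nonneg x]
              _ ≤ (1 + |x|) ^ n := by
                  apply pow_le_pow_right₀ (by linarith [abs_nonneg x]); omega
              _ ≤ (2 * n) ^ n * r := hgrow
          exact mul_le_mul hj1 hxp (by positivity) (by positivity)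
      _ = n * B * r := by rw [← Finset.sum_mul, ← hUdef, hBdef]; ring
  -- the derivative
  set P : ℝ → ℝ := fun t => ∑ j ∈ Finset.Icc 1 n, u j * t ^ (j - 1) with hP
  obtain ⟨D, hD⟩ : ∃ D : ℝ,
      D = u₀ * Real.cosh x + ∑ j ∈ Finset.Icc 1 n, u j * ((j - 1 : ℕ) * x ^ (j - 1 - 1)) :=
    ⟨_, rfl⟩
  obtain ⟨y, hy⟩ : ∃ y : ℝ, y = u₀ * Real.sinh x + P x := ⟨_, rfl⟩
  have hdh : HasDerivAt (fun t : ℝ => u₀ * Real.sinh t + P t) D x := by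
    rw [hD]
    exact HasDerivAt.add ((Real.hasDerivAt_sinh x).const_mul u₀)
      (HasDerivAt.fun_sum fun j _ => ((hasDerivAt_pow (j - 1) x).const_mul (u j)))
  have hdf : HasDerivAt (fun t : ℝ => Real.tanh (u₀ * Real.sinh t + P t))
      (1 / Real.cosh y ^ 2 * D) x := by
    rw [hy]; exact (hasDerivAt_tanh' _).comp x hdh
  rw [show (fun t : ℝ =>
      Real.tanh (u₀ * Real.sinh t + ∑ j ∈ Finset.Icc 1 n, u j * t ^ (j - 1)))
      = fun t : ℝ => Real.tanh (u₀ * Real.sinh t + P t) from rfl, hdf.deriv]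
  -- bounds on |D| and |y|
  have hcoshx : Real.cosh x ≤ s := by
    rw [hs, ← Real.cosh_abs, Real.cosh_eq]
    have := Real.exp_le_exp.2 (neg_le_self (abs_nonneg x))
    linarith
  have hDb : |D| ≤ (u₀ + n * B) * s := by
    calc |D| ≤ |u₀ * Real.cosh x|
          + |∑ j ∈ Finset.Icc 1 n, u j * ((j - 1 : ℕ) * x ^ (j - 1 - 1))| := by
          rw [hD]; exact abs_add_le _ _
      _ ≤ u₀ * s + n * B * r := by
          apply add_le_add _ hQb
          rw [abs_mul, abs_of_pos hu₀, abs_of_pos (Real.cosh_pos x)]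
          exact mul_le_mul_of_nonneg_left hcoshx hu₀.le
      _ ≤ (u₀ + n * B) * s := by
          have hh : (n:ℝ) * B * r ≤ (n:ℝ) * B * s :=
            mul_le_mul_of_nonneg_left hrs (by positivity)
          nlinarith
  have hylow : u₀ * (s - 1) / 2 - B * r ≤ |y| := by
    have h1 : |u₀ * Real.sinh x| - |P x| ≤ |y| := by
      have := abs_sub_abs_le_abs_sub (u₀ * Real.sinh x) (-(P x))
      rw [abs_neg, sub_neg_eq_add, ← hy] at this
      exact this
    have h2 : u₀ * ((s - 1) / 2) ≤ |u₀ * Real.sinh x| := by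
      rw [abs_mul, abs_of_pos hu₀, Real.abs_sinh]
      apply mul_le_mul_of_nonneg_left _ hu₀.le
      rw [Real.sinh_eq, hs]
      have : Real.exp (-|x|) ≤ 1 := Real.exp_le_one_iff.2 (neg_nonpos.2 (abs_nonneg x))
      linarith
    have h3 : |P x| ≤ B * r := hPb
    nlinarith
  have hcy2 : Real.exp (u₀ * (s - 1) - 2 * B * r) / 4 ≤ Real.cosh y ^ 2 := by
    have h1 : Real.exp |y| / 2 ≤ Real.cosh y := by
      rw [← Real.cosh_abs, Real.cosh_eq]
      have := (Real.exp_pos (-|y|)).le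
      linarith
    have h2 : Real.exp (u₀ * (s - 1) - 2 * B * r) ≤ Real.exp |y| ^ 2 := by
      rw [← Real.exp_nat_mul]
      apply Real.exp_le_exp.2
      push_cast
      nlinarith
    nlinarith [Real.exp_pos |y|, Real.cosh_pos y,
      Real.exp_pos (u₀ * (s - 1) - 2 * B * r)]
  -- combine
  have hcy2' : (0:ℝ) < Real.exp (u₀ * (s - 1) - 2 * B * r) / 4 := by positivity
  have step1 : |1 / Real.cosh y ^ 2 * D| ≤
      ((u₀ + n * B) * s) / (Real.exp (u₀ * (s - 1) - 2 * B * r) / 4) := by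
    rw [abs_mul, abs_div, abs_one, abs_pow, abs_of_pos (Real.cosh_pos y),
      div_mul_eq_mul_div, one_mul]
    exact div_le_div₀ (by positivity) hDb hcy2' hcy2
  have step2 : ((u₀ + n * B) * s) / (Real.exp (u₀ * (s - 1) - 2 * B * r) / 4)
      = 4 * (u₀ + n * B) * s * Real.exp (u₀ + 2 * B * r - u₀ * s) := by
    rw [show u₀ + 2 * B * r - u₀ * s = -(u₀ * (s - 1) - 2 * B * r) by ring, Real.exp_neg]
    rw [div_div_eq_mul_div, div_eq_mul_inv]
    ring
  have key1 : Real.exp (u₀ + 2 * B * r - u₀ * s) ≤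
      Real.exp (u₀ + 4 * B ^ 2 / u₀) * Real.exp (u₀ * s / 4 - u₀ * s) := by
    rw [← Real.exp_add]
    apply Real.exp_le_exp.2
    have h2Br : 2 * B * r ≤ 4 * B ^ 2 / u₀ + u₀ * s / 4 := by
      rw [← hr2, div_add_div _ _ hu₀.ne' (by norm_num : (4:ℝ) ≠ 0),
        le_div_iff₀ (by positivity)]
      nlinarith [sq_nonneg (u₀ * r - 4 * B)]
    linarith
  have key2 : s ≤ 4 / u₀ * Real.exp (u₀ * s / 4) := by
    have h := Real.add_one_le_exp (u₀ * s / 4)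
    rw [div_mul_eq_mul_div, le_div_iff₀ hu₀]
    nlinarith
  calc |1 / Real.cosh y ^ 2 * D|
      ≤ 4 * (u₀ + n * B) * s * Real.exp (u₀ + 2 * B * r - u₀ * s) := step2 ▸ step1
    _ ≤ 4 * (u₀ + n * B) * (4 / u₀ * Real.exp (u₀ * s / 4)) *
        (Real.exp (u₀ + 4 * B ^ 2 / u₀) * Real.exp (u₀ * s / 4 - u₀ * s)) := by
        apply mul_le_mul _ key1 (Real.exp_pos _).le (by positivity)
        exact mul_le_mul_of_nonneg_left key2 (by positivity)
    _ = 16 * (u₀ + n * B) / u₀ * Real.exp (u₀ + 4 * B ^ 2 / u₀) *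
        Real.exp (-(u₀ / 2 * Real.exp (1 * |x|))) := by
        have hE : Real.exp (-(u₀ / 2 * s))
            = Real.exp (u₀ * s / 4) * Real.exp (u₀ * s / 4 - u₀ * s) := by
          rw [← Real.exp_add]; congr 1; ring
        rw [one_mul, ← hs, hE]
        field_simp
        ring
end

section
/- Let n be a positive integer, let u₀ > 0 and let u₁, …, u_n be real numbers, and define h(t) = u₀·sinh(t) + Σ_{j=1}^{n} u_j·t^{j−1} for real t, and set φ(t) = tanh(h(t)). Then φ has double exponential decay toward the endpoints ±1: there exist constants C > 0, β > 0, γ > 0 and T > 0 such that 1 − |φ(x)| ≤ C·exp(−β·e^{γ|x|}) for all real x with |x| ≥ T. -/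
open Real

lemma abs_tanh (y : ℝ) : |Real.tanh y| = Real.tanh |y| := by
  rw [Real.tanh_eq_sinh_div_cosh, Real.tanh_eq_sinh_div_cosh, abs_div,
    ← Real.abs_sinh, abs_of_pos (Real.cosh_pos y), Real.cosh_abs]

lemma one_sub_abs_tanh_le (y : ℝ) : 1 - |Real.tanh y| ≤ 2 * Real.exp (-(2*|y|)) := by
  rw [abs_tanh]
  set t := |y| with ht
  have hc : 0 < Real.cosh t := Real.cosh_pos t
  have h1 : 1 - Real.tanh t = Real.exp (-t) / Real.cosh t := by
    rw [Real.tanh_eq_sinh_div_cosh, Real.sinh_eq, Real.cosh_eq]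
    field_simp
    ring
  have h2 : Real.exp t / 2 ≤ Real.cosh t := by
    rw [Real.cosh_eq]; nlinarith [Real.exp_pos (-t)]
  have h3 : Real.exp (-t) / Real.cosh t ≤ Real.exp (-t) / (Real.exp t / 2) :=
    div_le_div_of_nonneg_left (Real.exp_pos _).le (by positivity) h2
  rw [h1]
  refine h3.trans_eq ?_
  rw [div_div_eq_mul_div, mul_comm, mul_div_assoc, Real.exp_neg, ← Real.exp_neg t,
    ← Real.exp_sub]
  ring_nf

/-- For the polynomially adjusted `sinh` map
`h(t) = u₀ sinh t + Σ_{j=1}^{n} u_j t^{j−1}` with `u₀ > 0`, the transformation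
`φ = tanh ∘ h` approaches the endpoints `±1` double exponentially. -/
theorem tanh_polynomial_sinh_double_exponential_endpoint_decay
    (n : ℕ) (hn : 0 < n) (u₀ : ℝ) (hu₀ : 0 < u₀) (u : ℕ → ℝ) :
    ∃ C β γ T : ℝ, 0 < C ∧ 0 < β ∧ 0 < γ ∧ 0 < T ∧ ∀ x : ℝ, T ≤ |x| →
      1 - |Real.tanh (u₀ * Real.sinh x + ∑ j ∈ Finset.Icc 1 n, u j * x ^ (j - 1))| ≤
        C * Real.exp (-(β * Real.exp (γ * |x|))) := by
  set A : ℝ := ∑ j ∈ Finset.Icc 1 n, |u j| * ((Nat.factorial (j-1) : ℝ) * 2^(j-1)) with hA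
  have hA0 : 0 ≤ A := Finset.sum_nonneg (fun j _ => by positivity)
  set M : ℝ := max 2 ((4/u₀)*(u₀/2+A)) with hM
  have hM2 : (2:ℝ) ≤ M := le_max_left _ _
  refine ⟨2, u₀/2, 1, 2 * Real.log M, by norm_num, by positivity, one_pos, ?_, ?_⟩
  · have : (0:ℝ) < Real.log M := Real.log_pos (by linarith)
    linarith
  intro x hx
  -- notation
  set h : ℝ := u₀ * Real.sinh x + ∑ j ∈ Finset.Icc 1 n, u j * x ^ (j - 1) with hh
  set s : ℝ := Real.exp (|x|/2) with hs
  have hs1 : M ≤ s := by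
    rw [hs]
    calc M = Real.exp (Real.log M) := (Real.exp_log (by linarith)).symm
    _ ≤ Real.exp (|x|/2) := Real.exp_le_exp.mpr (by linarith)
  have hssq : s * s = Real.exp |x| := by
    rw [hs, ← Real.exp_add]; ring_nf
  -- polynomial bound
  have hterm : ∀ k : ℕ, |x|^k ≤ ((Nat.factorial k : ℝ) * 2^k) * s := by
    intro k
    have h0 : (0:ℝ) ≤ |x|/2 := by positivity
    have h1 := Real.pow_div_factorial_le_exp (|x|/2) h0 k
    rw [div_pow, div_div, div_le_iff₀ (by positivity)] at h1
    calc |x|^k ≤ Real.exp (|x|/2) * ((2:ℝ)^k * (Nat.factorial k : ℝ)) := h1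
    _ = ((Nat.factorial k : ℝ) * 2^k) * s := by rw [hs]; ring
  have hpoly : |∑ j ∈ Finset.Icc 1 n, u j * x ^ (j - 1)| ≤ A * s := by
    calc |∑ j ∈ Finset.Icc 1 n, u j * x ^ (j - 1)|
        ≤ ∑ j ∈ Finset.Icc 1 n, |u j * x ^ (j - 1)| := Finset.abs_sum_le_sum_abs _ _
      _ ≤ ∑ j ∈ Finset.Icc 1 n, |u j| * (((Nat.factorial (j-1) : ℝ) * 2^(j-1)) * s) := by
          refine Finset.sum_le_sum (fun j _ => ?_)
          rw [abs_mul, abs_pow]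
          exact mul_le_mul_of_nonneg_left (hterm (j-1)) (abs_nonneg _)
      _ = A * s := by rw [hA, Finset.sum_mul]; exact Finset.sum_congr rfl (fun j _ => by ring)
  -- sinh bound
  have hsinh : (s * s - 1)/2 ≤ |Real.sinh x| := by
    rw [Real.abs_sinh, Real.sinh_eq, ← hssq]
    have : Real.exp (-|x|) ≤ 1 := Real.exp_le_one_iff.mpr (by simpa using abs_nonneg x)
    linarith
  -- key inequality on M
  have h4 : 4*(u₀/2+A) ≤ u₀ * M := by
    have h5 : (4/u₀)*(u₀/2+A) ≤ M := le_max_right _ _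
    rw [div_mul_eq_mul_div, div_le_iff₀ hu₀] at h5
    linarith
  -- lower bound on |h|
  have hs0 : (0:ℝ) < s := Real.exp_pos _
  have hs2 : (2:ℝ) ≤ s := hM2.trans hs1
  have hlow : (u₀/4) * (s*s) ≤ |h| := by
    have h6 : u₀ * ((s*s-1)/2) - A * s ≤ |h| := by
      have h7 := abs_sub_abs_le_abs_sub (u₀ * Real.sinh x) (-(∑ j ∈ Finset.Icc 1 n, u j * x ^ (j - 1)))
      rw [sub_neg_eq_add, ← hh, abs_neg, abs_mul, abs_of_pos hu₀] at h7
      nlinarith [mul_le_mul_of_nonneg_left hsinh hu₀.le]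
    have p1 : 4*(u₀/2+A)*s ≤ u₀*M*s := mul_le_mul_of_nonneg_right h4 hs0.le
    have p2 : u₀*M*s ≤ u₀*(s*s) := by nlinarith [mul_le_mul_of_nonneg_left (mul_le_mul_of_nonneg_right hs1 hs0.le) hu₀.le]
    have q : 2*u₀ ≤ u₀*s := by nlinarith [mul_le_mul_of_nonneg_left hs2 hu₀.le]
    linarith
  -- conclude
  have hmain := one_sub_abs_tanh_le h
  refine hmain.trans ?_
  have : (u₀/2) * Real.exp (1 * |x|) ≤ 2 * |h| := by
    rw [one_mul, ← hssq]; linarith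
  have := Real.exp_le_exp.mpr (neg_le_neg this)
  linarith
end

section
/- For every positive integer m and every real κ > 0, the m-dimensional box expectation admits the one-dimensional representation ∫_{[0,1]^m} exp(−κ·(r₁² + ⋯ + r_m²)^{1/2}) dr₁⋯dr_m = (1/2) · (π/(2κ))^{(m−1)/2} · ∫₀^∞ t^{(m−1)/2} · e^{−κt/2} · erf((κ/(2t))^{1/2})^m dt. -/
open Real MeasureTheory

/-- The error function `erf(u) = (2/√π) ∫₀^u e^{−s²} ds`. -/
noncomputable def erf (u : ℝ) : ℝ :=
  (2 / Real.sqrt π) * ∫ s in (0:ℝ)..u, Real.exp (-(s ^ 2))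

open Set

lemma glasser {b : ℝ} (hb : 0 < b) :
    ∫ x in Ioi (0:ℝ), Real.exp (-(x^2 + b^2/x^2)) = Real.sqrt π / 2 * Real.exp (-(2*b)) := by
  set g : ℝ → ℝ := fun x => Real.exp (-(x - b/x)^2) with hg
  -- derivative facts
  have hderiv : ∀ x ∈ Ioi (0:ℝ), HasDerivWithinAt (fun x => x - b/x) (1 + b/x^2) (Ioi 0) x := by
    intro x hx
    have hx0 : x ≠ 0 := ne_of_gt hx
    have h1 : HasDerivAt (fun x : ℝ => x - b/x) (1 - b * (-(x^2)⁻¹)) x := by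
      simpa [div_eq_mul_inv] using
        (hasDerivAt_id' x).fun_sub ((hasDerivAt_inv hx0).const_mul b)
    have : (1 - b * (-(x^2)⁻¹)) = 1 + b/x^2 := by field_simp; ring
    exact (this ▸ h1).hasDerivWithinAt
  have hinj : InjOn (fun x : ℝ => x - b/x) (Ioi 0) := by
    have : StrictMonoOn (fun x : ℝ => x - b/x) (Ioi 0) := by
      intro x hx y hy hxy
      have hx : (0:ℝ) < x := hx
      have hy : (0:ℝ) < y := hy
      have : b/y < b/x := by
        apply div_lt_div_of_pos_left hb hx hxy
      simp only []
      linarith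
    exact this.injOn
  have himg : (fun x : ℝ => x - b/x) '' (Ioi 0) = univ := by
    apply eq_univ_of_forall
    intro w
    have hs0 : (0:ℝ) ≤ w^2 + 4*b := by positivity
    set s := Real.sqrt (w^2 + 4*b) with hsdef
    have hs : s^2 = w^2 + 4*b := Real.sq_sqrt hs0
    have hws : |w| < s := by
      have : Real.sqrt (w^2) < s := by
        apply Real.sqrt_lt_sqrt (by positivity); linarith
      simpa [Real.sqrt_sq_eq_abs] using this
    have hxpos : 0 < (w + s)/2 := by
      have := neg_abs_le w
      linarith [abs_nonneg w, (abs_lt.mp hws).1]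
    refine ⟨(w+s)/2, hxpos, ?_⟩
    have hws0 : w + s ≠ 0 := by intro h; rw [h] at hxpos; simp at hxpos
    show (w+s)/2 - b/((w+s)/2) = w
    field_simp
    nlinarith [hs]
  -- first change of variables
  have key1 : ∫ x in Ioi (0:ℝ), (1 + b/x^2) * g x = Real.sqrt π := by
    have := integral_image_eq_integral_abs_deriv_smul measurableSet_Ioi hderiv hinj
      (fun w => Real.exp (-w^2))
    rw [himg] at this
    have hL : ∫ w, Real.exp (-w^2) = Real.sqrt π := by
      simpa using integral_gaussian 1
    rw [Measure.restrict_univ, hL] at this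
    rw [this]
    apply setIntegral_congr_fun measurableSet_Ioi
    intro x hx
    have hx : (0:ℝ) < x := hx
    have habs : |1 + b/x^2| = 1 + b/x^2 := abs_of_pos (by positivity)
    simp [habs, smul_eq_mul, hg]
  -- second change of variables : x ↦ b / x
  have hderiv2 : ∀ x ∈ Ioi (0:ℝ), HasDerivWithinAt (fun x => b/x) (-(b/x^2)) (Ioi 0) x := by
    intro x hx
    have hx0 : x ≠ 0 := ne_of_gt hx
    have h1 : HasDerivAt (fun x : ℝ => b/x) (b * (-(x^2)⁻¹)) x := by
      simpa [div_eq_mul_inv] using (hasDerivAt_inv hx0).const_mul b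
    have : b * (-(x^2)⁻¹) = -(b/x^2) := by field_simp
    exact (this ▸ h1).hasDerivWithinAt
  have hinj2 : InjOn (fun x : ℝ => b/x) (Ioi 0) := by
    intro x hx y hy hxy
    have hx : (0:ℝ) < x := hx
    have hy : (0:ℝ) < y := hy
    field_simp at hxy
    linarith
  have himg2 : (fun x : ℝ => b/x) '' (Ioi 0) = Ioi 0 := by
    apply Subset.antisymm
    · rintro _ ⟨x, hx, rfl⟩; exact div_pos hb hx
    · rintro y hy; exact ⟨b/y, div_pos hb hy, by field_simp⟩
  have key2 : ∫ x in Ioi (0:ℝ), g x = ∫ x in Ioi (0:ℝ), (b/x^2) * g x := by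
    have := integral_image_eq_integral_abs_deriv_smul measurableSet_Ioi hderiv2 hinj2 g
    rw [himg2] at this
    rw [this]
    apply setIntegral_congr_fun measurableSet_Ioi
    intro x hx
    have hx : (0:ℝ) < x := hx
    have habs : |(-(b/x^2))| = b/x^2 := by
      rw [abs_neg]; exact abs_of_pos (by positivity)
    have harg : b/x - b/(b/x) = -(x - b/x) := by field_simp; ring
    simp only [habs, smul_eq_mul, hg, harg, neg_sq]
  -- integrability of g on Ioi 0
  have hgmeas : Measurable g := by
    apply Real.measurable_exp.comp
    apply Measurable.neg
    exact ((measurable_id.sub ((measurable_inv).const_mul b)).pow_const 2).comp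
      (by simpa [div_eq_mul_inv] using measurable_id')
  have hgint : IntegrableOn g (Ioi 0) := by
    apply Integrable.mono' ((integrable_exp_neg_mul_sq one_pos).const_mul
      (Real.exp (2*b))).integrableOn hgmeas.aestronglyMeasurable.restrict
    filter_upwards [ae_restrict_mem measurableSet_Ioi] with x hx
    have hx : (0:ℝ) < x := hx
    have hx0 : x ≠ 0 := ne_of_gt hx
    rw [Real.norm_eq_abs, abs_of_pos (Real.exp_pos _)]
    rw [← Real.exp_add]
    show Real.exp (-(x - b/x)^2) ≤ _
    apply Real.exp_le_exp.2
    have : (x - b/x)^2 = x^2 - 2*b + b^2/x^2 := by field_simp; ring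
    rw [this]
    have : (0:ℝ) ≤ b^2/x^2 := by positivity
    nlinarith
  have hg2int : IntegrableOn (fun x => (b/x^2) * g x) (Ioi 0) := by
    have hiff := integrableOn_image_iff_integrableOn_abs_deriv_smul
      measurableSet_Ioi hderiv2 hinj2 g
    rw [himg2] at hiff
    apply (hiff.mp hgint).congr_fun _ measurableSet_Ioi
    intro x hx
    have hx : (0:ℝ) < x := hx
    have habs : |(-(b/x^2))| = b/x^2 := by
      rw [abs_neg]; exact abs_of_pos (by positivity)
    have harg : b/x - b/(b/x) = -(x - b/x) := by field_simp; ring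
    simp only [habs, smul_eq_mul, hg, harg, neg_sq]
  have hsplit : ∫ x in Ioi (0:ℝ), (1 + b/x^2) * g x
      = (∫ x in Ioi (0:ℝ), g x) + ∫ x in Ioi (0:ℝ), (b/x^2) * g x := by
    rw [← integral_add hgint hg2int]
    apply setIntegral_congr_fun measurableSet_Ioi
    intro x _
    ring
  have hgval : ∫ x in Ioi (0:ℝ), g x = Real.sqrt π / 2 := by
    rw [hsplit, ← key2] at key1
    linarith
  calc ∫ x in Ioi (0:ℝ), Real.exp (-(x^2 + b^2/x^2))
      = ∫ x in Ioi (0:ℝ), Real.exp (-(2*b)) * g x := by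
        apply setIntegral_congr_fun measurableSet_Ioi
        intro x hx
        have hx : (0:ℝ) < x := hx
        have hx0 : x ≠ 0 := ne_of_gt hx
        show Real.exp (-(x^2 + b^2/x^2)) = Real.exp (-(2*b)) * Real.exp (-(x - b/x)^2)
        rw [← Real.exp_add]
        congr 1
        field_simp
        ring
    _ = Real.exp (-(2*b)) * (Real.sqrt π / 2) := by rw [integral_const_mul, hgval]
    _ = Real.sqrt π / 2 * Real.exp (-(2*b)) := by ring

lemma subord {a : ℝ} (ha : 0 ≤ a) :
    ∫ u in Ioi (0:ℝ), u ^ (-(1/2):ℝ) * (Real.exp (-u) * Real.exp (-(a^2/(4*u))))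
      = Real.sqrt π * Real.exp (-a) := by
  rcases eq_or_lt_of_le ha with rfl | ha'
  · simp only [ne_eq, OfNat.ofNat_ne_zero, not_false_eq_true, zero_pow, zero_div, neg_zero,
      Real.exp_zero, mul_one]
    rw [show (Real.sqrt π : ℝ) = Real.Gamma (1/2) from (Real.Gamma_one_half_eq).symm,
      Real.Gamma_eq_integral (by norm_num : (0:ℝ) < 1/2)]
    apply setIntegral_congr_fun measurableSet_Ioi
    intro u _
    show u ^ (-(1/2):ℝ) * Real.exp (-u) = Real.exp (-u) * u ^ ((1/2:ℝ) - 1)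
    rw [mul_comm]
    norm_num
  · set g : ℝ → ℝ := fun u => u ^ (-(1/2):ℝ) * (Real.exp (-u) * Real.exp (-(a^2/(4*u)))) with hgdef
    have key := integral_comp_rpow_Ioi_of_pos (g := g) (p := 2) two_pos
    rw [← key]
    have hpw : ∀ x ∈ Ioi (0:ℝ), (2 * x ^ ((2:ℝ)-1)) • g (x ^ (2:ℝ))
        = 2 * Real.exp (-(x^2 + (a/2)^2/x^2)) := by
      intro x hx
      have hx : (0:ℝ) < x := hx
      have hx2 : (x:ℝ) ^ (2:ℝ) = x^2 := by
        rw [← Real.rpow_natCast x 2]; norm_num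
      have hxinv : ((x:ℝ)^2) ^ (-(1/2):ℝ) = x⁻¹ := by
        rw [← hx2, ← Real.rpow_mul hx.le]
        norm_num [Real.rpow_neg_one]
      have hx1 : x ^ ((2:ℝ)-1) = x := by norm_num
      have he : Real.exp (-(x^2)) * Real.exp (-(a^2/(4*x^2)))
          = Real.exp (-(x^2 + (a/2)^2/x^2)) := by
        rw [← Real.exp_add]
        congr 1
        have hx0 : x ≠ 0 := ne_of_gt hx
        field_simp
        ring
      rw [hgdef]
      simp only [hx2, smul_eq_mul, hx1, hxinv, he]
      set E := Real.exp (-(x^2 + (a/2)^2/x^2)) with hE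
      field_simp
    rw [setIntegral_congr_fun measurableSet_Ioi hpw, integral_const_mul,
      glasser (half_pos ha')]
    rw [show 2*(a/2) = a by ring]
    ring

lemma erf_integral (c : ℝ) :
    (∫ s in (0:ℝ)..c, Real.exp (-(s^2))) = Real.sqrt π / 2 * erf c := by
  rw [erf]
  have h : Real.sqrt π ≠ 0 := by positivity
  field_simp

lemma erf_eval {c : ℝ} (hc : 0 < c) :
    ∫ s in (0:ℝ)..1, Real.exp (-(c*s)^2) = c⁻¹ * (Real.sqrt π / 2 * erf c) := by
  have := intervalIntegral.integral_comp_mul_left (a := (0:ℝ)) (b := 1)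
    (fun x => Real.exp (-(x^2))) hc.ne'
  simp only [mul_zero, mul_one, smul_eq_mul] at this
  rw [this, erf_integral]

lemma box_prod (m : ℕ) (f : ℝ → ℝ) :
    ∫ r in Set.univ.pi (fun _ : Fin m => Icc (0:ℝ) 1), ∏ i, f (r i)
      = (∫ s in (0:ℝ)..1, f s) ^ m := by
  rw [← MeasureTheory.integral_indicator (MeasurableSet.univ_pi fun _ => measurableSet_Icc)]
  have hind : (Set.univ.pi (fun _ : Fin m => Icc (0:ℝ) 1)).indicator
        (fun r : Fin m → ℝ => ∏ i, f (r i))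
      = fun r : Fin m → ℝ => ∏ i : Fin m, (Icc (0:ℝ) 1).indicator f (r i) := by
    funext r
    by_cases h : r ∈ Set.univ.pi (fun _ : Fin m => Icc (0:ℝ) 1)
    · rw [Set.indicator_of_mem h]
      exact Finset.prod_congr rfl fun i _ =>
        (Set.indicator_of_mem (h i (Set.mem_univ i)) f).symm
    · rw [Set.indicator_of_notMem h]
      obtain ⟨i, hi⟩ : ∃ i, r i ∉ Icc (0:ℝ) 1 := by
        rw [Set.mem_univ_pi] at h
        push_neg at h
        exact h
      exact (Finset.prod_eq_zero (Finset.mem_univ i)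
        (Set.indicator_of_notMem hi f)).symm
  rw [hind]; beta_reduce; rw [MeasureTheory.volume_pi, MeasureTheory.integral_fintype_prod_eq_pow (ι := Fin m) ((Icc (0:ℝ) 1).indicator f)]
  rw [Fintype.card_fin]
  congr 1
  rw [MeasureTheory.integral_indicator measurableSet_Icc,
    MeasureTheory.integral_Icc_eq_integral_Ioc,
    ← intervalIntegral.integral_of_le zero_le_one]

/-- One-dimensional representation of the box expectation:
`⟨e^{−κ|r⃗|}⟩_{r⃗∈[0,1]^m} = (1/2)(π/(2κ))^{(m−1)/2} ∫₀^∞ t^{(m−1)/2} e^{−κt/2} erf(√(κ/(2t)))^m dt`. -/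
theorem box_expectation_one_dimensional (m : ℕ) (hm : 0 < m) (κ : ℝ) (hκ : 0 < κ) :
    (∫ r in Set.univ.pi (fun _ : Fin m => Set.Icc (0:ℝ) 1),
        Real.exp (-κ * Real.sqrt (∑ i, r i ^ 2))) =
      (1 / 2) * (π / (2 * κ)) ^ (((m : ℝ) - 1) / 2) *
        ∫ t in Set.Ioi (0:ℝ),
          t ^ (((m : ℝ) - 1) / 2) * Real.exp (-κ * t / 2) *
            erf (Real.sqrt (κ / (2 * t))) ^ m := by
  set e : ℝ := ((m : ℝ) - 1) / 2 with he
  set B : Set (Fin m → ℝ) := Set.univ.pi (fun _ : Fin m => Icc (0:ℝ) 1) with hB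
  have hBmeas : MeasurableSet B := MeasurableSet.univ_pi fun _ => measurableSet_Icc
  have hSnn : ∀ r : Fin m → ℝ, 0 ≤ ∑ i, r i ^ 2 :=
    fun r => Finset.sum_nonneg fun i _ => sq_nonneg _
  -- the subordination kernel
  set F : (Fin m → ℝ) → ℝ → ℝ := fun r u =>
    u ^ (-(1/2):ℝ) * (Real.exp (-u) * Real.exp (-(κ^2 * (∑ i, r i ^ 2)/(4*u)))) with hF
  -- pointwise subordination
  have hpoint : ∀ r : Fin m → ℝ,
      Real.exp (-κ * Real.sqrt (∑ i, r i ^ 2))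
        = (Real.sqrt π)⁻¹ * ∫ u in Ioi (0:ℝ), F r u := by
    intro r
    have ha : 0 ≤ κ * Real.sqrt (∑ i, r i ^ 2) := mul_nonneg hκ.le (Real.sqrt_nonneg _)
    have h2 : (κ * Real.sqrt (∑ i, r i ^ 2))^2 = κ^2 * (∑ i, r i ^ 2) := by
      rw [mul_pow, Real.sq_sqrt (hSnn r)]
    have hs := subord ha
    rw [h2] at hs
    rw [hF]
    simp only []
    rw [hs, ← mul_assoc, inv_mul_cancel₀ (by positivity : Real.sqrt π ≠ 0), one_mul, neg_mul]
  -- integrability on the product for Fubini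
  have hGamma : IntegrableOn (fun u : ℝ => u ^ (-(1/2):ℝ) * Real.exp (-u)) (Ioi 0) := by
    have h := Real.GammaIntegral_convergent (by norm_num : (0:ℝ) < 1/2)
    apply h.congr_fun _ measurableSet_Ioi
    intro x hx
    show Real.exp (-x) * x ^ ((1:ℝ)/2 - 1) = x ^ (-(1/2):ℝ) * Real.exp (-x)
    rw [mul_comm]
    norm_num
  have hBfin : volume B < ⊤ := by
    rw [hB, volume_pi_pi]
    simp [Real.volume_Icc]
  have hone : IntegrableOn (fun _ : Fin m → ℝ => (1:ℝ)) B := by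
    exact integrableOn_const hBfin.ne
  have hFmeas : Measurable (Function.uncurry F) := by
    rw [hF]
    apply Measurable.mul
    · exact (measurable_snd.pow_const _)
    apply Measurable.mul
    · exact measurable_snd.neg.exp
    apply Measurable.exp
    apply Measurable.neg
    apply Measurable.div
    · exact measurable_const.mul
        (Finset.measurable_sum Finset.univ fun i _ =>
          ((measurable_pi_apply i).comp measurable_fst).pow_const 2)
    · exact measurable_snd.const_mul 4
  have hFint : Integrable (Function.uncurry F)
      ((volume.restrict B).prod (volume.restrict (Ioi 0))) := by
    have hbnd : Integrable (fun p : (Fin m → ℝ) × ℝ =>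
        (1:ℝ) * (p.2 ^ (-(1/2):ℝ) * Real.exp (-p.2)))
        ((volume.restrict B).prod (volume.restrict (Ioi 0))) :=
      Integrable.mul_prod hone hGamma
    apply hbnd.mono' hFmeas.aestronglyMeasurable
    have hmem : ∀ᵐ p : (Fin m → ℝ) × ℝ ∂((volume.restrict B).prod (volume.restrict (Ioi 0))),
        p ∈ B ×ˢ Ioi (0:ℝ) := by
      rw [Measure.prod_restrict]
      exact ae_restrict_mem (hBmeas.prod measurableSet_Ioi)
    filter_upwards [hmem] with p hp
    have hu : (0:ℝ) < p.2 := hp.2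
    have h1 : Function.uncurry F p = F p.1 p.2 := rfl
    rw [h1, hF]
    simp only []
    rw [Real.norm_eq_abs, abs_of_nonneg (by positivity), one_mul]
    have hexp : Real.exp (-(κ^2 * (∑ i, p.1 i ^ 2)/(4*p.2))) ≤ 1 := by
      rw [Real.exp_le_one_iff]
      exact neg_nonpos.2 (by positivity)
    have h0 : (0:ℝ) ≤ p.2 ^ (-(1/2):ℝ) := Real.rpow_nonneg hu.le _
    apply mul_le_mul_of_nonneg_left _ h0
    nth_rewrite 2 [← mul_one (Real.exp (-p.2))]
    exact mul_le_mul_of_nonneg_left hexp (Real.exp_pos _).le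
  -- inner integral evaluation
  have hinner : ∀ u ∈ Ioi (0:ℝ),
      (∫ r in B, F r u) = (π ^ ((m:ℝ)/2) / κ^m) *
        (u ^ e * Real.exp (-u) * erf (κ/(2*Real.sqrt u)) ^ m) := by
    intro u hu
    have hu : (0:ℝ) < u := hu
    have hsu : (0:ℝ) < Real.sqrt u := Real.sqrt_pos.2 hu
    set c : ℝ := κ/(2*Real.sqrt u) with hc
    have hcpos : 0 < c := by positivity
    have hc2 : c^2 = κ^2/(4*u) := by
      rw [hc, div_pow, mul_pow, Real.sq_sqrt hu.le]
      norm_num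
    have hsum : ∀ r : Fin m → ℝ,
        Real.exp (-(κ^2 * (∑ i, r i ^ 2)/(4*u))) = ∏ i, Real.exp (-(c * r i)^2) := by
      intro r
      rw [← Real.exp_sum]
      congr 1
      have : ∀ i : Fin m, -(c * r i)^2 = -(κ^2/(4*u) * r i ^ 2) := by
        intro i
        rw [mul_pow, hc2]
      simp_rw [this]
      rw [Finset.sum_neg_distrib, ← Finset.mul_sum]
      ring
    have hsplit : (∫ r in B, F r u)
        = (u ^ (-(1/2):ℝ) * Real.exp (-u)) * ∫ r in B, ∏ i, Real.exp (-(c * r i)^2) := by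
      rw [← MeasureTheory.integral_const_mul]
      apply setIntegral_congr_fun hBmeas
      intro r _
      rw [hF]
      simp only []
      rw [hsum r]
      ring
    rw [hsplit, box_prod m (fun s => Real.exp (-(c * s)^2)), erf_eval hcpos]
    -- now pure algebra
    have h1 : c⁻¹ * (Real.sqrt π / 2 * erf c) = (Real.sqrt u * Real.sqrt π / κ) * erf c := by
      rw [hc]
      field_simp
    rw [h1, mul_pow, div_pow, mul_pow]
    have h2 : (Real.sqrt u)^m = u ^ ((m:ℝ)/2) := by
      rw [← Real.rpow_natCast (Real.sqrt u) m, Real.sqrt_eq_rpow, ← Real.rpow_mul hu.le]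
      congr 1
      ring
    have h3 : (Real.sqrt π)^m = π ^ ((m:ℝ)/2) := by
      rw [← Real.rpow_natCast (Real.sqrt π) m, Real.sqrt_eq_rpow, ← Real.rpow_mul pi_pos.le]
      congr 1
      ring
    have h4 : u ^ (-(1/2):ℝ) * u ^ ((m:ℝ)/2) = u ^ e := by
      rw [← Real.rpow_add hu, he]
      congr 1
      ring
    rw [h2, h3, ← h4]
    ring
  -- Fubini and assembly of the left-hand side
  have hLHS : (∫ r in B, Real.exp (-κ * Real.sqrt (∑ i, r i ^ 2)))
      = (π ^ e / κ^m) * ∫ u in Ioi (0:ℝ),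
          u ^ e * Real.exp (-u) * erf (κ/(2*Real.sqrt u)) ^ m := by
    calc (∫ r in B, Real.exp (-κ * Real.sqrt (∑ i, r i ^ 2)))
        = ∫ r in B, (Real.sqrt π)⁻¹ * ∫ u in Ioi (0:ℝ), F r u :=
          integral_congr_ae (Filter.Eventually.of_forall fun r => hpoint r)
      _ = (Real.sqrt π)⁻¹ * ∫ r in B, ∫ u in Ioi (0:ℝ), F r u := by
          rw [MeasureTheory.integral_const_mul]
      _ = (Real.sqrt π)⁻¹ * ∫ u in Ioi (0:ℝ), ∫ r in B, F r u := by
          rw [integral_integral_swap hFint]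
      _ = (Real.sqrt π)⁻¹ * ∫ u in Ioi (0:ℝ), (π ^ ((m:ℝ)/2) / κ^m) *
            (u ^ e * Real.exp (-u) * erf (κ/(2*Real.sqrt u)) ^ m) := by
          rw [setIntegral_congr_fun measurableSet_Ioi hinner]
      _ = ((Real.sqrt π)⁻¹ * (π ^ ((m:ℝ)/2) / κ^m)) * ∫ u in Ioi (0:ℝ),
            u ^ e * Real.exp (-u) * erf (κ/(2*Real.sqrt u)) ^ m := by
          rw [MeasureTheory.integral_const_mul, mul_assoc]
      _ = (π ^ e / κ^m) * ∫ u in Ioi (0:ℝ),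
            u ^ e * Real.exp (-u) * erf (κ/(2*Real.sqrt u)) ^ m := by
          congr 1
          have hπ : (Real.sqrt π)⁻¹ * π ^ ((m:ℝ)/2) = π ^ e := by
            rw [Real.sqrt_eq_rpow, ← Real.rpow_neg_one (π ^ ((1:ℝ)/2)),
              ← Real.rpow_mul pi_pos.le, ← Real.rpow_add pi_pos]
            congr 1
            rw [he]
            ring
          rw [div_eq_mul_inv, ← mul_assoc, hπ, ← div_eq_mul_inv]
  -- change of variables on the right-hand side
  have hRHS : (∫ t in Ioi (0:ℝ),
        t ^ e * Real.exp (-κ * t / 2) * erf (Real.sqrt (κ / (2 * t))) ^ m)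
      = (2/κ) * ((2/κ) ^ e * ∫ u in Ioi (0:ℝ),
          u ^ e * Real.exp (-u) * erf (κ/(2*Real.sqrt u)) ^ m) := by
    have h2κ : (0:ℝ) < 2/κ := by positivity
    have hsub := integral_comp_mul_left_Ioi
      (fun t => t ^ e * Real.exp (-κ * t / 2) * erf (Real.sqrt (κ / (2 * t))) ^ m) 0 h2κ
    rw [mul_zero] at hsub
    simp only [smul_eq_mul] at hsub
    have hcomp : (∫ x in Ioi (0:ℝ), ((2/κ)*x) ^ e * Real.exp (-κ * ((2/κ)*x) / 2) *
          erf (Real.sqrt (κ / (2 * ((2/κ)*x)))) ^ m)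
        = (2/κ) ^ e * ∫ u in Ioi (0:ℝ),
            u ^ e * Real.exp (-u) * erf (κ/(2*Real.sqrt u)) ^ m := by
      rw [← MeasureTheory.integral_const_mul]
      apply setIntegral_congr_fun measurableSet_Ioi
      intro x hx
      have hx : (0:ℝ) < x := hx
      have e1 : ((2/κ)*x) ^ e = (2/κ) ^ e * x ^ e := Real.mul_rpow h2κ.le hx.le
      have e2 : -κ * ((2/κ)*x) / 2 = -x := by field_simp
      have e3 : κ / (2 * ((2/κ)*x)) = (κ/(2*Real.sqrt x))^2 := by
        rw [div_pow, mul_pow, Real.sq_sqrt hx.le]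
        field_simp
      have e4 : Real.sqrt ((κ/(2*Real.sqrt x))^2) = κ/(2*Real.sqrt x) :=
        Real.sqrt_sq (by positivity)
      show ((2/κ)*x) ^ e * Real.exp (-κ * ((2/κ)*x) / 2) *
          erf (Real.sqrt (κ / (2 * ((2/κ)*x)))) ^ m = _
      rw [e1, e2, e3, e4]
      ring
    calc (∫ t in Ioi (0:ℝ),
            t ^ e * Real.exp (-κ * t / 2) * erf (Real.sqrt (κ / (2 * t))) ^ m)
        = (2/κ) * ((2/κ)⁻¹ * ∫ t in Ioi (0:ℝ),
            t ^ e * Real.exp (-κ * t / 2) * erf (Real.sqrt (κ / (2 * t))) ^ m) := by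
          rw [← mul_assoc, mul_inv_cancel₀ h2κ.ne', one_mul]
      _ = (2/κ) * ∫ x in Ioi (0:ℝ), ((2/κ)*x) ^ e * Real.exp (-κ * ((2/κ)*x) / 2) *
            erf (Real.sqrt (κ / (2 * ((2/κ)*x)))) ^ m := by rw [← hsub]
      _ = (2/κ) * ((2/κ) ^ e * ∫ u in Ioi (0:ℝ),
            u ^ e * Real.exp (-u) * erf (κ/(2*Real.sqrt u)) ^ m) := by rw [hcomp]
  rw [hB] at hLHS
  rw [hLHS, hRHS]
  have hmul : (π/(2*κ))^e * (2/κ)^e = (π/κ^2)^e := by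
    rw [← Real.mul_rpow (by positivity) (by positivity)]
    congr 1
    field_simp
  have hκ2 : ((κ^2):ℝ)^e = κ ^ ((m:ℝ) - 1) := by
    rw [← Real.rpow_natCast κ 2, ← Real.rpow_mul hκ.le]
    congr 1
    rw [he]
    push_cast
    ring
  have hκm : (κ:ℝ)^m = κ ^ ((m:ℝ)-1) * κ := by
    have h1 : κ ^ ((m:ℝ)-1) * κ = κ ^ ((m:ℝ)-1) * κ ^ (1:ℝ) := by rw [Real.rpow_one]
    rw [h1, ← Real.rpow_add hκ, ← Real.rpow_natCast κ m]
    congr 1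
    push_cast
    ring
  have hconst : (1/2) * (π/(2*κ))^e * ((2/κ) * ((2/κ)^e)) = π^e/κ^m := by
    have hre : (1/2) * (π/(2*κ))^e * ((2/κ) * ((2/κ)^e)) = ((π/(2*κ))^e * (2/κ)^e) / κ := by
      ring
    rw [hre, hmul, Real.div_rpow pi_pos.le (by positivity), hκ2, hκm, div_div]
  rw [← hconst]
  ring
end
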